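/- Let f : ℂⁿ → ℂ be a mixed polynomial and z ∈ ℂⁿ. Then z ∈ Sing f if and only if there exists μ ∈ ℂ with |μ| = 1 such that conj(df)(z,z̄) = μ·∂̄f(z,z̄). -/

import Mathlib

open Complex Filter Finset

noncomputable section

abbrev MixedCoeff (n : ℕ) := ((Fin n → ℕ) × (Fin n → ℕ)) →₀ ℂ

namespace Mixed

variable {n : ℕ}

/-- Evaluation of a mixed polynomial given by its coefficient function `c`:
`f(z) = Σ c(ν,μ) zᵛ z̄ᵘ`. -/
def eval (c : MixedCoeff n) (z : Fin n → ℂ) : ℂ :=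
  c.sum fun p a => a * (∏ i, z i ^ p.1 i) * ∏ i, (starRingEnd ℂ) (z i) ^ p.2 i

/-- `∂f/∂z_i` evaluated at `(z, z̄)`. -/
def dz (c : MixedCoeff n) (i : Fin n) (z : Fin n → ℂ) : ℂ :=
  c.sum fun p a => a * (p.1 i) * (∏ j, z j ^ (p.1 j - if j = i then 1 else 0)) *
    ∏ j, (starRingEnd ℂ) (z j) ^ p.2 j

/-- `∂f/∂z̄_i` evaluated at `(z, z̄)`. -/
def dzbar (c : MixedCoeff n) (i : Fin n) (z : Fin n → ℂ) : ℂ :=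
  c.sum fun p a => a * (p.2 i) * (∏ j, z j ^ p.1 j) *
    ∏ j, (starRingEnd ℂ) (z j) ^ (p.2 j - if j = i then 1 else 0)

/-- The singular locus of `f` as a real map `ℝ²ⁿ → ℝ²`. -/
def Sing (c : MixedCoeff n) : Set (Fin n → ℂ) :=
  {z | ¬ Function.Surjective ⇑(fderiv ℝ (eval c) z)}

/-- The Milnor set `M(f)`. -/
def Milnor (c : MixedCoeff n) : Set (Fin n → ℂ) :=
  {z | ∃ (l : ℝ) (m : ℂ), m ≠ 0 ∧
    ∀ i, (l : ℂ) * z i = m * (starRingEnd ℂ) (dz c i z) + (starRingEnd ℂ) m * dzbar c i z}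

/-- The set `S(f)` of asymptotic ρ-nonregular values. -/
def Sset (c : MixedCoeff n) : Set ℂ :=
  {v | ∃ zk : ℕ → (Fin n → ℂ), (∀ k, zk k ∈ Milnor c) ∧
    Tendsto (fun k => ‖zk k‖) atTop atTop ∧
    Tendsto (fun k => eval c (zk k)) atTop (nhds v)}

/-- The point of `ℝⁿ` attached to the exponent pair `(ν,μ)`, namely `ν+μ`. -/
def suppPt (p : (Fin n → ℕ) × (Fin n → ℕ)) : Fin n → ℝ := fun i => ((p.1 i + p.2 i : ℕ) : ℝ)

/-- The support of `f`, as a subset of `ℝⁿ`. -/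
def suppPts (c : MixedCoeff n) : Set (Fin n → ℝ) := suppPt '' (c.support : Set _)

/-- The Newton polyhedron `Γ₀(f)`: convex hull of `{0} ∪ supp(f)`. -/
def Gamma0 (c : MixedCoeff n) : Set (Fin n → ℝ) := convexHull ℝ (insert 0 (suppPts c))

/-- `supp(f)‾`: the convex hull of `supp(f) \ {0}`. -/
def suppBar (c : MixedCoeff n) : Set (Fin n → ℝ) := convexHull ℝ (suppPts c \ {0})

/-- `F` is a face of the (compact convex) set `C`: either `C` itself or the set of
minimizers on `C` of a linear functional, and nonempty. -/
def IsFaceOf (C F : Set (Fin n → ℝ)) : Prop :=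
  F.Nonempty ∧ (F = C ∨ ∃ a : Fin n → ℝ,
    F = {x ∈ C | ∀ y ∈ C, ∑ i, a i * x i ≤ ∑ i, a i * y i})

/-- `Δ` is a face of the Newton boundary at infinity `Γ⁺(f)`: a face of `Γ₀(f)` not
containing the origin. -/
def IsGammaPlusFace (c : MixedCoeff n) (Δ : Set (Fin n → ℝ)) : Prop :=
  IsFaceOf (Gamma0 c) Δ ∧ (0 : Fin n → ℝ) ∉ Δ

/-- `Γ⁺(f)` as a subset of `ℝⁿ`: the union of the faces of `Γ₀(f)` not containing `0`. -/
def GammaPlusSet (c : MixedCoeff n) : Set (Fin n → ℝ) :=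
  {x | ∃ Δ, IsGammaPlusFace c Δ ∧ x ∈ Δ}

/-- The truncation `f_Δ` of `f` to a subset `Δ ⊆ ℝⁿ`. -/
def trunc (c : MixedCoeff n) (Δ : Set (Fin n → ℝ)) : MixedCoeff n :=
  @Finsupp.filter _ _ _ (fun p => suppPt p ∈ Δ) (Classical.decPred _) c

/-- Newton non-degeneracy: for every face `Δ` of `Γ⁺(f)`,
`Sing f_Δ ∩ f_Δ⁻¹(0) ∩ (ℂ*)ⁿ = ∅`. -/
def NewtonNonDeg (c : MixedCoeff n) : Prop :=
  ∀ Δ, IsGammaPlusFace c Δ → ∀ z : Fin n → ℂ, (∀ i, z i ≠ 0) →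
    eval (trunc c Δ) z = 0 → z ∉ Sing (trunc c Δ)

/-- Newton strong non-degeneracy: for every face `Δ` of `Γ⁺(f)`,
`Sing f_Δ ∩ (ℂ*)ⁿ = ∅`. -/
def NewtonStronglyNonDeg (c : MixedCoeff n) : Prop :=
  ∀ Δ, IsGammaPlusFace c Δ → ∀ z : Fin n → ℂ, (∀ i, z i ≠ 0) →
    z ∉ Sing (trunc c Δ)

/-- `Δ` is a bad face of `supp(f)‾`. -/
def IsBadFace (c : MixedCoeff n) (Δ : Set (Fin n → ℝ)) : Prop :=
  IsFaceOf (suppBar c) Δ ∧ (0 : Fin n → ℝ) ∈ affineSpan ℝ Δ ∧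
    ∃ a : Fin n → ℝ, (∃ i, a i < 0) ∧ (∃ j, 0 < a j) ∧
      {x ∈ suppBar c | ∑ i, a i * x i = 0} = Δ

/-- `f` depends effectively on all its variables. -/
def EffectiveAll (c : MixedCoeff n) : Prop :=
  ∀ i, ∃ p ∈ c.support, 0 < p.1 i + p.2 i

/-- The Euclidean norm on `ℂⁿ`. -/
def norm2 (v : Fin n → ℂ) : ℝ := Real.sqrt (∑ i, Complex.normSq (v i))

end Mixed

namespace MixedSingAux
variable {n : ℕ}
open Mixed

def mono1CLM (ν μ : ℕ) (w : ℂ) : ℂ →L[ℝ] ℂ :=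
  ((ν : ℂ) * w ^ (ν - 1) * (starRingEnd ℂ) w ^ μ) • (ContinuousLinearMap.id ℝ ℂ)
    + ((μ : ℂ) * w ^ ν * (starRingEnd ℂ) w ^ (μ - 1)) • (Complex.conjCLE : ℂ →L[ℝ] ℂ)

lemma mono1CLM_apply (ν μ : ℕ) (w v : ℂ) :
    mono1CLM ν μ w v = (ν : ℂ) * w ^ (ν - 1) * (starRingEnd ℂ) w ^ μ * v
      + (μ : ℂ) * w ^ ν * (starRingEnd ℂ) w ^ (μ - 1) * (starRingEnd ℂ) v := by
  simp [mono1CLM, mul_assoc]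

lemma hasFDerivAt_mono1 (ν μ : ℕ) (w : ℂ) :
    HasFDerivAt (fun w : ℂ => w ^ ν * (starRingEnd ℂ) w ^ μ) (mono1CLM ν μ w) w := by
  have h1 : HasFDerivAt (fun w : ℂ => w ^ ν)
      ((ContinuousLinearMap.smulRight (1 : ℂ →L[ℂ] ℂ) ((ν : ℂ) * w ^ (ν - 1))).restrictScalars ℝ)
      w := ((hasDerivAt_pow ν w).hasFDerivAt).restrictScalars ℝ
  have hc : HasFDerivAt (fun w : ℂ => (starRingEnd ℂ) w) (Complex.conjCLE : ℂ →L[ℝ] ℂ) w :=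
    Complex.conjCLE.hasFDerivAt
  have h2 : HasFDerivAt (fun w : ℂ => (starRingEnd ℂ) w ^ μ)
      (((ContinuousLinearMap.smulRight (1 : ℂ →L[ℂ] ℂ)
          ((μ : ℂ) * (starRingEnd ℂ) w ^ (μ - 1))).restrictScalars ℝ).comp
        (Complex.conjCLE : ℂ →L[ℝ] ℂ)) w :=
    (((hasDerivAt_pow μ ((starRingEnd ℂ) w)).hasFDerivAt).restrictScalars ℝ).comp w hc
  refine (h1.mul h2).congr_fderiv ?_
  refine ContinuousLinearMap.ext fun v => ?_
  simp [mono1CLM, smul_eq_mul]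
  ring

/-- The real-linear map `v ↦ ∑ i, a i * v i + b i * conj (v i)`. -/
def Lmap (a b : Fin n → ℂ) : (Fin n → ℂ) →L[ℝ] ℂ :=
  ∑ i, ((a i) • (ContinuousLinearMap.proj i : (Fin n → ℂ) →L[ℝ] ℂ)
    + (b i) • ((Complex.conjCLE : ℂ →L[ℝ] ℂ).comp
        (ContinuousLinearMap.proj i : (Fin n → ℂ) →L[ℝ] ℂ)))

lemma Lmap_apply (a b : Fin n → ℂ) (v : Fin n → ℂ) :
    Lmap a b v = ∑ i, (a i * v i + b i * (starRingEnd ℂ) (v i)) := by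
  simp [Lmap, smul_eq_mul]

lemma hasFDerivAt_monomial (p : (Fin n → ℕ) × (Fin n → ℕ)) (z : Fin n → ℂ) :
    HasFDerivAt (fun z : Fin n → ℂ => (∏ i, z i ^ p.1 i) * ∏ i, (starRingEnd ℂ) (z i) ^ p.2 i)
      (∑ i, (∏ j ∈ Finset.univ.erase i, (z j ^ p.1 j * (starRingEnd ℂ) (z j) ^ p.2 j)) •
        ((mono1CLM (p.1 i) (p.2 i) (z i)).comp
          (ContinuousLinearMap.proj i : (Fin n → ℂ) →L[ℝ] ℂ))) z := by
  have hfun : (fun z : Fin n → ℂ => (∏ i, z i ^ p.1 i) * ∏ i, (starRingEnd ℂ) (z i) ^ p.2 i)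
      = fun z : Fin n → ℂ => ∏ i, (z i ^ p.1 i * (starRingEnd ℂ) (z i) ^ p.2 i) := by
    funext z; rw [Finset.prod_mul_distrib]
  rw [hfun]
  exact HasFDerivAt.finset_prod fun i _ =>
    by have h := (hasFDerivAt_mono1 (p.1 i) (p.2 i) (z i)).comp (f := fun y : Fin n → ℂ => y i) z
          (hasFDerivAt_apply i z)
       exact h

lemma hasFDerivAt_eval (c : MixedCoeff n) (z : Fin n → ℂ) :
    HasFDerivAt (eval c) (Lmap (fun i => dz c i z) (fun i => dzbar c i z)) z := by
  have heval : eval c = fun z : Fin n → ℂ => ∑ p ∈ c.support,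
      c p * ((∏ i, z i ^ p.1 i) * ∏ i, (starRingEnd ℂ) (z i) ^ p.2 i) := by
    funext z; simp [eval, Finsupp.sum, mul_assoc]
  rw [heval]
  have H := HasFDerivAt.fun_sum (u := c.support)
    (fun p _ => (hasFDerivAt_monomial p z).const_mul (c p))
  refine H.congr_fderiv ?_
  refine ContinuousLinearMap.ext fun v => ?_
  have lhs : (Lmap (fun i => dz c i z) (fun i => dzbar c i z)) v
      = ∑ i, ∑ p ∈ c.support,
        ((c p * (p.1 i) * (∏ j, z j ^ (p.1 j - if j = i then 1 else 0)) *
            ∏ j, (starRingEnd ℂ) (z j) ^ p.2 j) * v i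
         + (c p * (p.2 i) * (∏ j, z j ^ p.1 j) *
            ∏ j, (starRingEnd ℂ) (z j) ^ (p.2 j - if j = i then 1 else 0)) *
              (starRingEnd ℂ) (v i)) := by
    rw [Lmap_apply]
    refine Finset.sum_congr rfl fun i _ => ?_
    rw [dz, dzbar, Finsupp.sum, Finsupp.sum, Finset.sum_mul, Finset.sum_mul,
      ← Finset.sum_add_distrib]
  rw [lhs, Finset.sum_comm]
  simp only [ContinuousLinearMap.sum_apply, ContinuousLinearMap.smul_apply,
    ContinuousLinearMap.comp_apply, ContinuousLinearMap.proj_apply, smul_eq_mul,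
    mono1CLM_apply]
  refine Finset.sum_congr rfl fun p _ => ?_
  rw [Finset.mul_sum]
  refine Finset.sum_congr rfl fun i _ => ?_
  have hA : (∏ j, z j ^ (p.1 j - if j = i then 1 else 0))
      = z i ^ (p.1 i - 1) * ∏ j ∈ Finset.univ.erase i, z j ^ p.1 j := by
    rw [← Finset.mul_prod_erase Finset.univ _ (Finset.mem_univ i), if_pos rfl]
    exact congrArg _ (Finset.prod_congr rfl fun j hj => by
      rw [if_neg (Finset.ne_of_mem_erase hj), Nat.sub_zero])
  have hB : (∏ j, (starRingEnd ℂ) (z j) ^ p.2 j)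
      = (starRingEnd ℂ) (z i) ^ p.2 i * ∏ j ∈ Finset.univ.erase i, (starRingEnd ℂ) (z j) ^ p.2 j :=
    (Finset.mul_prod_erase Finset.univ _ (Finset.mem_univ i)).symm
  have hC : (∏ j, z j ^ p.1 j) = z i ^ p.1 i * ∏ j ∈ Finset.univ.erase i, z j ^ p.1 j :=
    (Finset.mul_prod_erase Finset.univ _ (Finset.mem_univ i)).symm
  have hD : (∏ j, (starRingEnd ℂ) (z j) ^ (p.2 j - if j = i then 1 else 0))
      = (starRingEnd ℂ) (z i) ^ (p.2 i - 1)
        * ∏ j ∈ Finset.univ.erase i, (starRingEnd ℂ) (z j) ^ p.2 j := by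
    rw [← Finset.mul_prod_erase Finset.univ _ (Finset.mem_univ i), if_pos rfl]
    exact congrArg _ (Finset.prod_congr rfl fun j hj => by
      rw [if_neg (Finset.ne_of_mem_erase hj), Nat.sub_zero])
  have hE : (∏ j ∈ Finset.univ.erase i, (z j ^ p.1 j * (starRingEnd ℂ) (z j) ^ p.2 j))
      = (∏ j ∈ Finset.univ.erase i, z j ^ p.1 j)
        * ∏ j ∈ Finset.univ.erase i, (starRingEnd ℂ) (z j) ^ p.2 j :=
    Finset.prod_mul_distrib
  rw [hA, hB, hC, hD, hE]
  ring

lemma Lmap_single (a b : Fin n → ℂ) (i : Fin n) (t : ℂ) :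
    Lmap a b (Pi.single i t) = a i * t + b i * (starRingEnd ℂ) t := by
  rw [Lmap_apply]
  rw [Finset.sum_eq_single i]
  · simp
  · intro j _ hj; simp [Pi.single_apply, hj]
  · simp

lemma not_surj_iff (a b : Fin n → ℂ) :
    ¬ Function.Surjective ⇑(Lmap a b) ↔ ∃ m : ℂ, ‖m‖ = 1 ∧
      ∀ i, (starRingEnd ℂ) (a i) = m * b i := by
  constructor
  · intro hns
    by_cases hz : ∀ i, a i = 0 ∧ b i = 0
    · exact ⟨1, by simp, fun i => by simp [(hz i).1, (hz i).2]⟩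
    · push_neg at hz
      obtain ⟨i₀, hi₀⟩ := hz
      -- produce a nonzero element of the range
      have hex : ∃ v₀ : Fin n → ℂ, Lmap a b v₀ ≠ 0 := by
        by_contra hall
        push_neg at hall
        have h1 := hall (Pi.single i₀ 1)
        have h2 := hall (Pi.single i₀ I)
        rw [Lmap_single] at h1 h2
        simp only [map_one, mul_one, Complex.conj_I, mul_neg] at h1 h2
        have h2' : (a i₀ - b i₀) * I = 0 := by linear_combination h2
        have h2'' : a i₀ - b i₀ = 0 := by
          rcases mul_eq_zero.1 h2' with h | h
          · exact h
          · exact absurd h Complex.I_ne_zero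
        have ha : a i₀ = 0 := by linear_combination (h1 + h2'') / 2
        have hbb : b i₀ = 0 := by linear_combination (h1 - h2'') / 2
        exact hi₀ ha hbb
      obtain ⟨v₀, hv₀⟩ := hex
      set l := Lmap a b v₀ with hl
      have h0 : ∀ v, ((starRingEnd ℂ) l * Lmap a b v).im = 0 := by
        intro v
        by_contra hvim
        apply hns
        intro ζ
        set A := (starRingEnd ℂ) l with hA
        set w := Lmap a b v with hw
        set β : ℝ := (A * ζ).im / (A * w).im with hβ
        set α : ℝ := ((A * ζ).re - β * (A * w).re) / Complex.normSq l with hα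
        refine ⟨α • v₀ + β • v, ?_⟩
        have hmap : Lmap a b (α • v₀ + β • v) = (α : ℂ) * l + (β : ℂ) * w := by
          rw [map_add, map_smul, map_smul, ← hl, ← hw]
          simp [Complex.real_smul]
        rw [hmap]
        have hl0 : l ≠ 0 := hv₀
        have hA0 : A ≠ 0 := by simpa [hA] using hl0
        have hns0 : Complex.normSq l ≠ 0 := by simpa using hl0
        apply mul_left_cancel₀ hA0
        have hP : A * l = (Complex.normSq l : ℂ) := by
          rw [hA, Complex.conj_mul']
          norm_cast
          rw [Complex.sq_norm]
        rw [mul_add, mul_left_comm A, mul_left_comm A, hP]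
        apply Complex.ext
        · simp only [Complex.add_re, Complex.mul_re, Complex.ofReal_re, Complex.ofReal_im,
            Complex.mul_im]
          rw [hα, div_mul_cancel₀ _ hns0]; simp only [Complex.mul_re]; ring
        · simp only [Complex.add_im, Complex.mul_im, Complex.ofReal_re, Complex.ofReal_im,
            Complex.mul_re]
          have hvim' : A.re * w.im + A.im * w.re ≠ 0 := by
            simpa [Complex.mul_im] using hvim
          rw [hβ]; simp only [Complex.mul_im]; rw [div_mul_cancel₀ _ hvim']; ring
      -- now extract the relation
      refine ⟨(starRingEnd ℂ) l / l, by rw [norm_div, RCLike.norm_conj, div_self (norm_ne_zero_iff.2 hv₀)], fun i => ?_⟩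
      have h1 := h0 (Pi.single i 1)
      have h2 := h0 (Pi.single i I)
      rw [Lmap_single] at h1 h2
      simp only [map_one, mul_one, Complex.conj_I, mul_neg] at h1 h2
      -- h1 : (conj l * (a i + b i)).im = 0
      -- h2 : (conj l * (a i * I - b i * I)).im = 0
      set A := (starRingEnd ℂ) l with hA
      set u := A * a i with hu
      set t := A * b i with ht
      have him : u.im = - t.im := by
        have : (u + t).im = 0 := by rw [hu, ht, ← mul_add]; exact h1
        simp [Complex.add_im] at this; linarith
      have hre : u.re = t.re := by
        have h2' : ((u - t) * I).im = 0 := by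
          rw [hu, ht]; ring_nf; ring_nf at h2
          convert h2 using 2; ring
        rw [Complex.mul_I_im, Complex.sub_re] at h2'
        linarith
      have hconj : (starRingEnd ℂ) u = t := by
        apply Complex.ext <;> simp [hre, him]
      have hl0 : l ≠ 0 := hv₀
      have hconj2 : l * (starRingEnd ℂ) (a i) = (starRingEnd ℂ) l * b i := by
        calc l * (starRingEnd ℂ) (a i)
            = (starRingEnd ℂ) ((starRingEnd ℂ) l * a i) := by
              rw [map_mul, Complex.conj_conj]
          _ = (starRingEnd ℂ) l * b i := by rw [← hu, hconj, ht]
      rw [div_mul_eq_mul_div, eq_div_iff hl0, mul_comm ((starRingEnd ℂ) l) (b i)] at *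
      linear_combination hconj2
  · rintro ⟨m, hm, hab⟩ hsurj
    obtain ⟨l, hl⟩ := IsAlgClosed.exists_pow_nat_eq ((starRingEnd ℂ) m) (n := 2) (by norm_num)
    have hml : ‖l‖ = 1 := by
      have h1 : ‖l‖ ^ 2 = 1 := by
        rw [← norm_pow, hl]
        simpa using hm
      have h2 : (‖l‖ - 1) * (‖l‖ + 1) = 0 := by nlinarith
      rcases mul_eq_zero.1 h2 with h | h
      · linarith
      · nlinarith [norm_nonneg l]
    have hll : l * (starRingEnd ℂ) l = 1 := by
      rw [Complex.mul_conj]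
      norm_cast
      rw [Complex.normSq_eq_norm_sq, hml]; norm_num
    have hmm : m * (starRingEnd ℂ) m = 1 := by
      rw [Complex.mul_conj]
      norm_cast
      rw [Complex.normSq_eq_norm_sq, hm]; norm_num
    have hb : ∀ i, b i = (starRingEnd ℂ) m * (starRingEnd ℂ) (a i) := by
      intro i
      rw [hab i]
      calc b i = (m * (starRingEnd ℂ) m) * b i := by rw [hmm]; ring
      _ = (starRingEnd ℂ) m * (m * b i) := by ring
    have hreal : ∀ v, Lmap a b v = l * ((∑ i, 2 * ((starRingEnd ℂ) l * (a i * v i)).re : ℝ) : ℂ) := by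
      intro v
      rw [Lmap_apply]
      push_cast
      rw [Finset.mul_sum]
      refine Finset.sum_congr rfl fun i _ => ?_
      rw [hb i]
      set w := a i * v i with hw
      have : (starRingEnd ℂ) m * ((starRingEnd ℂ) (a i) * (starRingEnd ℂ) (v i)) = l ^ 2 * (starRingEnd ℂ) w := by
        rw [hl, hw, map_mul]
      rw [mul_assoc, this]
      have hre : ((2 : ℂ) * (((starRingEnd ℂ) l * w).re : ℂ)) = (starRingEnd ℂ) l * w + (starRingEnd ℂ) ((starRingEnd ℂ) l * w) := by
        rw [Complex.add_conj]
        push_cast; ring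
      calc w + l ^ 2 * (starRingEnd ℂ) w
          = l * ((starRingEnd ℂ) l * w + l * (starRingEnd ℂ) w) := by
            rw [mul_add, ← mul_assoc, hll, one_mul]; ring
        _ = l * ((starRingEnd ℂ) l * w + (starRingEnd ℂ) ((starRingEnd ℂ) l * w)) := by
            have : (starRingEnd ℂ) ((starRingEnd ℂ) l * w) = l * (starRingEnd ℂ) w := by
              rw [map_mul, Complex.conj_conj]
            rw [this]
        _ = l * ((2 : ℂ) * (((starRingEnd ℂ) l * w).re : ℂ)) := by rw [hre]
    have hl0 : l ≠ 0 := by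
      intro h; rw [h] at hml; simp at hml
    obtain ⟨v, hv⟩ := hsurj (l * I)
    rw [hreal v] at hv
    have := mul_left_cancel₀ hl0 hv.symm
    have him := congrArg Complex.im this
    simp at him
end MixedSingAux

/-- Lemma 2.2, Oka: `z ∈ Sing f` iff there is `μ ∈ ℂ` with `|μ| = 1` such
that `conj(df)(z,z̄) = μ·∂̄f(z,z̄)`. -/
theorem mixed_sing_iff {n : ℕ} (c : MixedCoeff n) (z : Fin n → ℂ) :
    z ∈ Mixed.Sing c ↔ ∃ m : ℂ, ‖m‖ = 1 ∧
      ∀ i, (starRingEnd ℂ) (Mixed.dz c i z) = m * Mixed.dzbar c i z := by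
  have hF := MixedSingAux.hasFDerivAt_eval c z
  have hfd : fderiv ℝ (Mixed.eval c) z
      = MixedSingAux.Lmap (fun i => Mixed.dz c i z) (fun i => Mixed.dzbar c i z) := hF.fderiv
  show ¬ Function.Surjective ⇑(fderiv ℝ (Mixed.eval c) z) ↔ _
  rw [hfd]
  exact MixedSingAux.not_surj_iff _ _
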